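/- Let W = F_{n₁} ⊗ ⋯ ⊗ F_{n_k} with N = n₁⋯n_k, and write any diagonal unitary E ∈ Δ_N as E = Σ_{r ∈ G} c_r D_r where G = ℤ_{n₁} × ⋯ × ℤ_{n_k}, D_r = ⊗_i diag(1, ω_i, …, ω_i^{n_i−1})^{r_i}, and c_r = (1/N)·tr(E D_r*). Then W* E W = Σ_{r ∈ G} c_r σ_{n−r}, a linear combination of permutation matrices; in particular, each coefficient c_r appears as an entry of W*EW exactly N times. -/

import Mathlib

open Matrix Complex

/-- ω = e^{-2πi/n} -/
noncomputable def fourierOmega (n : ℕ) : ℂ :=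
  Complex.exp (-2 * Real.pi * Complex.I / n)

/-- The n×n discrete Fourier matrix with entries ω^{jk}/√n. -/
noncomputable def fourierMatrix (n : ℕ) : Matrix (Fin n) (Fin n) ℂ :=
  Matrix.of fun j k => fourierOmega n ^ ((j : ℕ) * (k : ℕ)) / (Real.sqrt n : ℂ)

/-- D = diag(1, ω, ω², …, ω^{n-1}). -/
noncomputable def fourierDiag (n : ℕ) : Matrix (Fin n) (Fin n) ℂ :=
  Matrix.diagonal fun i => fourierOmega n ^ (i : ℕ)

/-- σ = E₁₂ + E₂₃ + ⋯ + E_{n1}, the cyclic shift sending e_i to e_{i-1 mod n}. -/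
noncomputable def cyclicShift (n : ℕ) : Matrix (Fin n) (Fin n) ℂ :=
  Matrix.of fun i j => if (j : ℕ) = ((i : ℕ) + 1) % n then 1 else 0

/-- W = F_{n₁} ⊗ ⋯ ⊗ F_{n_k}, realized on the index set Π i, Fin (n i). -/
noncomputable def tensorFourier {k : ℕ} (n : Fin k → ℕ) :
    Matrix (∀ i, Fin (n i)) (∀ i, Fin (n i)) ℂ :=
  Matrix.of fun x y => ∏ i, fourierMatrix (n i) (x i) (y i)

/-- D_r = D_{n₁}^{r₁} ⊗ ⋯ ⊗ D_{n_k}^{r_k}. -/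
noncomputable def tensorDiag {k : ℕ} (n : Fin k → ℕ) (r : ∀ i, Fin (n i)) :
    Matrix (∀ i, Fin (n i)) (∀ i, Fin (n i)) ℂ :=
  Matrix.diagonal fun x => ∏ i, fourierOmega (n i) ^ ((x i : ℕ) * (r i : ℕ))

/-- σ_{m} = σ_{n₁}^{m₁} ⊗ ⋯ ⊗ σ_{n_k}^{m_k}. -/
noncomputable def tensorShift {k : ℕ} (n : Fin k → ℕ) (m : ∀ _ : Fin k, ℕ) :
    Matrix (∀ i, Fin (n i)) (∀ i, Fin (n i)) ℂ :=
  Matrix.of fun x y => ∏ i, ((cyclicShift (n i)) ^ (m i)) (x i) (y i)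

lemma fourierOmega_pow_self (n : ℕ) [NeZero n] : fourierOmega n ^ n = 1 := by
  have hn : (n : ℂ) ≠ 0 := Nat.cast_ne_zero.mpr (NeZero.ne n)
  rw [fourierOmega, ← Complex.exp_nat_mul]
  have : (n : ℂ) * (-2 * Real.pi * Complex.I / n) = -(2 * Real.pi * Complex.I) := by
    field_simp
  rw [this, Complex.exp_neg, Complex.exp_two_pi_mul_I, inv_one]

lemma fourierOmega_pow_mod (n : ℕ) [NeZero n] (a : ℕ) :
    fourierOmega n ^ a = fourierOmega n ^ (a % n) := by
  conv_lhs => rw [← Nat.div_add_mod a n]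
  rw [pow_add, pow_mul, fourierOmega_pow_self, one_pow, one_mul]

lemma fourierOmega_congr (n : ℕ) [NeZero n] {a b : ℕ} (h : (a : ZMod n) = b) :
    fourierOmega n ^ a = fourierOmega n ^ b := by
  have hm := (ZMod.natCast_eq_natCast_iff a b n).mp h
  rw [fourierOmega_pow_mod n a, fourierOmega_pow_mod n b, hm]

lemma star_fourierOmega (n : ℕ) [NeZero n] :
    star (fourierOmega n) = fourierOmega n ^ (n - 1) := by
  have h1 : star (fourierOmega n) * fourierOmega n = 1 := by
    show (starRingEnd ℂ) _ * _ = 1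
    rw [fourierOmega, ← Complex.exp_conj, ← Complex.exp_add]
    have : (starRingEnd ℂ) (-2 * Real.pi * Complex.I / n) + -2 * Real.pi * Complex.I / n = 0 := by
      simp [map_div₀, _root_.map_mul, _root_.map_neg, map_ofNat, Complex.conj_ofReal, Complex.conj_I]
      ring
    rw [this, Complex.exp_zero]
  have h2 : fourierOmega n ^ (n - 1) * fourierOmega n = 1 := by
    rw [← pow_succ, Nat.sub_add_cancel (Nat.one_le_iff_ne_zero.mpr (NeZero.ne n)),
      fourierOmega_pow_self]
  rw [eq_inv_of_mul_eq_one_left h1, eq_inv_of_mul_eq_one_left h2]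

lemma star_fourierOmega_pow (n : ℕ) [NeZero n] (p : ℕ) :
    star (fourierOmega n ^ p) = fourierOmega n ^ ((n - 1) * p) := by
  rw [star_pow, star_fourierOmega, ← pow_mul]

lemma key (n : ℕ) [NeZero n] (z x y : Fin n) :
    star (fourierOmega n ^ ((z : ℕ) * (x : ℕ))) * fourierOmega n ^ ((z : ℕ) * (y : ℕ))
      = star (fourierOmega n ^ ((z : ℕ) * ((x - y : Fin n) : ℕ))) := by
  rw [star_fourierOmega_pow, star_fourierOmega_pow, ← pow_add]
  apply fourierOmega_congr
  have hy : (y : ℕ) ≤ n := le_of_lt y.isLt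
  have h1 : 1 ≤ n := Nat.one_le_iff_ne_zero.mpr (NeZero.ne n)
  rw [Fin.sub_def]
  push_cast [Nat.cast_sub hy, Nat.cast_sub h1, ZMod.natCast_mod]
  rw [ZMod.natCast_self]
  ring

lemma coord (n : ℕ) [NeZero n] (z x y : Fin n) :
    star (fourierMatrix n z x) * fourierMatrix n z y
      = (n : ℂ)⁻¹ * star (fourierOmega n ^ ((z : ℕ) * ((x - y : Fin n) : ℕ))) := by
  have hs : ((Real.sqrt n : ℝ) : ℂ) * ((Real.sqrt n : ℝ) : ℂ) = (n : ℂ) := by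
    rw [← Complex.ofReal_mul, Real.mul_self_sqrt (Nat.cast_nonneg n)]
    norm_num
  have hst : star (((Real.sqrt n : ℝ) : ℂ)) = ((Real.sqrt n : ℝ) : ℂ) := by
    rw [Complex.star_def, Complex.conj_ofReal]
  simp only [fourierMatrix, Matrix.of_apply]
  rw [star_div₀, hst, div_mul_div_comm, hs, key n z x y, div_eq_inv_mul]

lemma cyclicShift_pow_apply (n : ℕ) [NeZero n] (m : ℕ) (i j : Fin n) :
    (cyclicShift n ^ m) i j = if (j : ℕ) = ((i : ℕ) + m) % n then 1 else 0 := by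
  induction m generalizing j with
  | zero =>
    simp [Matrix.one_apply, Nat.mod_eq_of_lt i.isLt, Fin.ext_iff, eq_comm]
  | succ m ih =>
    have hpos : 0 < n := Nat.pos_of_ne_zero (NeZero.ne n)
    have hl : (((i : ℕ) + m) % n) < n := Nat.mod_lt _ hpos
    set l0 : Fin n := ⟨((i : ℕ) + m) % n, hl⟩ with hl0
    rw [pow_succ, Matrix.mul_apply]
    have step : ∀ l : Fin n, (cyclicShift n ^ m) i l * cyclicShift n l j
        = if l = l0 then (if (j : ℕ) = (((l0 : ℕ)) + 1) % n then (1:ℂ) else 0) else 0 := by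
      intro l
      rw [ih, cyclicShift]
      by_cases h : l = l0
      · subst h
        simp [Matrix.of_apply, show (l0 : ℕ) = ((i : ℕ) + m) % n from rfl]
      · have : ¬ ((l : ℕ) = ((i : ℕ) + m) % n) := by
          intro hv; exact h (Fin.ext hv)
        simp [Matrix.of_apply, this, h]
    rw [Finset.sum_congr rfl fun l _ => step l, Finset.sum_ite_eq' Finset.univ l0]
    simp only [Finset.mem_univ, if_true]
    have : (((l0 : ℕ)) + 1) % n = ((i : ℕ) + (m + 1)) % n := by
      show ((((i : ℕ) + m) % n) + 1) % n = _
      rw [Nat.mod_add_mod, Nat.add_assoc]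
    rw [this]

lemma tensorShift_apply {k : ℕ} (n : Fin k → ℕ) [∀ i, NeZero (n i)]
    (r x y : ∀ i, Fin (n i)) :
    tensorShift n (fun i => n i - (r i : ℕ)) x y = if x - y = r then 1 else 0 := by
  rw [tensorShift, Matrix.of_apply]
  have h1 : ∀ i, ((cyclicShift (n i)) ^ (n i - (r i : ℕ))) (x i) (y i)
      = if x i - y i = r i then (1 : ℂ) else 0 := by
    intro i
    rw [cyclicShift_pow_apply]
    refine if_congr ?_ rfl rfl
    have hval : (x i - r i : Fin (n i)) = ⟨(n i - (r i : ℕ) + (x i : ℕ)) % n i, by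
        exact Nat.mod_lt _ (Nat.pos_of_ne_zero (NeZero.ne (n i)))⟩ := Fin.sub_def _ _
    constructor
    · intro h
      have hy : y i = x i - r i := by
        apply Fin.ext
        rw [hval, h, Nat.add_comm]
      rw [hy, sub_sub_cancel]
    · intro h
      have hy : y i = x i - r i := by rw [← h, sub_sub_cancel]
      rw [hy, hval]
      simp [Nat.add_comm]
  calc (∏ i, ((cyclicShift (n i)) ^ (n i - (r i : ℕ))) (x i) (y i))
      = ∏ i, (if x i - y i = r i then (1 : ℂ) else 0) := Finset.prod_congr rfl fun i _ => h1 i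
    _ = if x - y = r then 1 else 0 := by
        by_cases hxy : x - y = r
        · rw [if_pos hxy]
          have h2 : ∀ i, (if x i - y i = r i then (1:ℂ) else 0) = 1 :=
            fun i => if_pos (congrFun hxy i)
          simp [h2]
        · rw [if_neg hxy]
          obtain ⟨i, hi⟩ : ∃ i, ¬ (x i - y i = r i) := by
            by_contra hc
            push_neg at hc
            exact hxy (funext fun i => hc i)
          exact Finset.prod_eq_zero (Finset.mem_univ i) (if_neg hi)

lemma entry_eq {k : ℕ} (n : Fin k → ℕ) [∀ i, NeZero (n i)]
    (f : (∀ i, Fin (n i)) → ℂ) (x y : ∀ i, Fin (n i)) :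
    ((tensorFourier n)ᴴ * Matrix.diagonal f * tensorFourier n) x y =
      (Fintype.card (∀ i, Fin (n i)) : ℂ)⁻¹ *
        Matrix.trace (Matrix.diagonal f * (tensorDiag n (x - y))ᴴ) := by
  have hcard : ((Fintype.card (∀ i, Fin (n i)) : ℕ) : ℂ) = ∏ i, (n i : ℂ) := by
    rw [Fintype.card_pi]
    push_cast
    simp
  rw [tensorDiag, Matrix.diagonal_conjTranspose, Matrix.diagonal_mul_diagonal,
    Matrix.trace_diagonal]
  rw [Matrix.mul_apply]
  simp only [Matrix.mul_diagonal, Matrix.conjTranspose_apply, Pi.mul_apply, Pi.star_apply]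
  rw [Finset.mul_sum]
  apply Finset.sum_congr rfl
  intro z _
  simp only [tensorFourier, Matrix.of_apply]
  calc star (∏ i, fourierMatrix (n i) (z i) (x i)) * f z * (∏ i, fourierMatrix (n i) (z i) (y i))
      = f z * ∏ i, (star (fourierMatrix (n i) (z i) (x i)) * fourierMatrix (n i) (z i) (y i)) := by
        rw [star_prod, Finset.prod_mul_distrib]; ring
    _ = f z * ∏ i, ((n i : ℂ)⁻¹ *
          star (fourierOmega (n i) ^ ((z i : ℕ) * ((x i - y i : Fin (n i)) : ℕ)))) :=
        congrArg _ (Finset.prod_congr rfl fun i _ => coord (n i) (z i) (x i) (y i))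
    _ = (Fintype.card (∀ i, Fin (n i)) : ℂ)⁻¹ *
          (f z * star (∏ i, fourierOmega (n i) ^ ((z i : ℕ) * (((x - y) i : Fin (n i)) : ℕ)))) := by
        rw [Finset.prod_mul_distrib, Finset.prod_inv_distrib, ← hcard, star_prod]
        simp only [Pi.sub_apply]
        ring

theorem stmt_17 {k : ℕ} (n : Fin k → ℕ) [∀ i, NeZero (n i)]
    (f : (∀ i, Fin (n i)) → ℂ) (hf : ∀ x, ‖f x‖ = 1) :
    ((tensorFourier n)ᴴ * Matrix.diagonal f * tensorFourier n =
        ∑ r : ∀ i, Fin (n i),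
          ((Fintype.card (∀ i, Fin (n i)) : ℂ)⁻¹ *
              Matrix.trace (Matrix.diagonal f * (tensorDiag n r)ᴴ)) •
            tensorShift n (fun i => n i - (r i : ℕ))) ∧
      ∀ x y : ∀ i, Fin (n i),
        ((tensorFourier n)ᴴ * Matrix.diagonal f * tensorFourier n) x y =
          (Fintype.card (∀ i, Fin (n i)) : ℂ)⁻¹ *
            Matrix.trace (Matrix.diagonal f * (tensorDiag n (x - y))ᴴ) := by
  have hmain : ∀ x y : ∀ i, Fin (n i),
      ((tensorFourier n)ᴴ * Matrix.diagonal f * tensorFourier n) x y =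
        (Fintype.card (∀ i, Fin (n i)) : ℂ)⁻¹ *
          Matrix.trace (Matrix.diagonal f * (tensorDiag n (x - y))ᴴ) :=
    fun x y => entry_eq n f x y
  refine ⟨?_, hmain⟩
  ext x y
  rw [hmain x y, Matrix.sum_apply]
  have hterm : ∀ r : ∀ i, Fin (n i),
      (((Fintype.card (∀ i, Fin (n i)) : ℂ)⁻¹ *
          Matrix.trace (Matrix.diagonal f * (tensorDiag n r)ᴴ)) •
        tensorShift n (fun i => n i - (r i : ℕ))) x y =
      if x - y = r then
        (Fintype.card (∀ i, Fin (n i)) : ℂ)⁻¹ *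
          Matrix.trace (Matrix.diagonal f * (tensorDiag n r)ᴴ) else 0 := by
    intro r
    rw [Matrix.smul_apply, tensorShift_apply, smul_eq_mul, mul_ite, mul_one, mul_zero]
  rw [Finset.sum_congr rfl fun r _ => hterm r, Finset.sum_ite_eq]
  simp
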